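/- Suppose ρ̇ : ∂E → ℝ is continuous on an ellipse E with the ℤ₂×ℤ₂ symmetry (invariance under (x,y) ↦ (±x,±y)), ρ̇ vanishes at the four endpoints of the axes, and after the change of variables the transform A(Z) = ∫_a^b ρ̇(t) γ₁(t) J(t) (t-(b-Z))^{-1/2} dt (with γ₁ J continuous and strictly positive on (a,b)) vanishes for a sequence of Z accumulating at b from below. Then ρ̇ ≡ 0. -/

import Mathlib

open MeasureTheory intervalIntegral Set


lemma aux_contOn {a b x p : ℝ} (hx : x < a) {f : ℝ → ℝ}
    (hf : ContinuousOn f (Set.Icc a b)) :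
    ContinuousOn (fun t => f t * (t - x) ^ p) (Set.Icc a b) := by
  apply hf.mul
  apply ContinuousOn.rpow_const (continuous_sub_right x).continuousOn
  intro t ht
  exact Or.inl (sub_ne_zero.mpr (ne_of_gt (lt_of_lt_of_le hx ht.1)))

lemma aux_deriv {a b : ℝ} (ha : 0 < a) (hab : a < b) {f : ℝ → ℝ}
    (hf : ContinuousOn f (Set.Icc a b)) (c : ℝ) (hc : 0 < c) (s₀ : ℝ) (hs₀ : s₀ < a) :
    HasDerivAt (fun s => ∫ t in a..b, f t * (t - s) ^ (-c))
      (c * ∫ t in a..b, f t * (t - s₀) ^ (-(c + 1))) s₀ := by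
  obtain ⟨M, hM⟩ := isCompact_Icc.exists_bound_of_continuousOn hf
  set ε : ℝ := (a - s₀) / 2 with hε
  have hεpos : 0 < ε := by simp only [hε]; linarith
  have hsub : Set.uIoc a b ⊆ Set.Icc a b := by
    rw [Set.uIoc_of_le hab.le]; exact Set.Ioc_subset_Icc_self
  have hball : ∀ x ∈ Metric.ball s₀ ε, ∀ t ∈ Set.Icc a b, ε ≤ t - x := by
    intro x hx t ht
    have h1 := abs_lt.1 (mem_ball_iff_norm.1 hx)
    have h2 := ht.1
    simp only [hε] at *
    linarith [h1.2]
  have main : HasDerivAt (fun s => ∫ t in a..b, f t * (t - s) ^ (-c))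
      (∫ t in a..b, f t * (c * (t - s₀) ^ (-(c + 1)))) s₀ := by
    refine (intervalIntegral.hasDerivAt_integral_of_dominated_loc_of_deriv_le (μ := volume)
      (F := fun s t => f t * (t - s) ^ (-c))
      (F' := fun s t => f t * (c * (t - s) ^ (-(c + 1))))
      (bound := fun _ => |M| * (c * ε ^ (-(c + 1)))) (Metric.ball_mem_nhds s₀ hεpos) ?_ ?_ ?_ ?_ ?_ ?_).2
    · filter_upwards [Metric.ball_mem_nhds s₀ hεpos] with x hx
      have hxa : x < a := by
        have h1 := abs_lt.1 (mem_ball_iff_norm.1 hx); simp only [hε] at h1; linarith [h1.2]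
      exact ((aux_contOn hxa hf).mono hsub).aestronglyMeasurable measurableSet_uIoc
    · apply ContinuousOn.intervalIntegrable
      rw [Set.uIcc_of_le hab.le]
      exact aux_contOn hs₀ hf
    · have h3 : ContinuousOn (fun t => f t * (c * (t - s₀) ^ (-(c + 1)))) (Set.Icc a b) := by
        have h2 : ContinuousOn (fun t => (f t * (t - s₀) ^ (-(c+1))) * c) (Set.Icc a b) :=
          (aux_contOn (p := -(c+1)) hs₀ hf).mul continuousOn_const
        convert h2 using 2 with t
        ring
      exact (h3.mono hsub).aestronglyMeasurable measurableSet_uIoc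
    · filter_upwards [] with t
      intro ht x hx
      have htI : t ∈ Set.Icc a b := hsub ht
      have h1 : ε ≤ t - x := hball x hx t htI
      rw [norm_mul, Real.norm_eq_abs, Real.norm_eq_abs]
      have hfb : |f t| ≤ |M| := (hM t htI).trans (le_abs_self M)
      have h2 : |c * (t - x) ^ (-(c + 1))| ≤ c * ε ^ (-(c + 1)) := by
        rw [abs_mul, abs_of_pos hc, abs_of_nonneg (Real.rpow_nonneg (by linarith) _)]
        exact mul_le_mul_of_nonneg_left
          (Real.rpow_le_rpow_of_nonpos hεpos h1 (by linarith)) hc.le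
      exact mul_le_mul hfb h2 (abs_nonneg _) (abs_nonneg _)
    · exact intervalIntegrable_const
    · filter_upwards [] with t
      intro ht x hx
      have htI : t ∈ Set.Icc a b := hsub ht
      have h1 : ε ≤ t - x := hball x hx t htI
      have hne : t - x ≠ 0 := by intro h0; rw [h0] at h1; linarith
      have hd : HasDerivAt (fun x : ℝ => t - x) (-1) x := (hasDerivAt_id x).const_sub t
      have h5 := (hd.rpow_const (p := -c) (Or.inl hne)).const_mul (f t)
      refine h5.congr_deriv ?_
      rw [show -c - 1 = -(c + 1) by ring]
      ring
  convert main using 1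
  rw [← intervalIntegral.integral_const_mul]
  congr 1; funext t; ring


lemma aux_dense {a b : ℝ} (ha : 0 < a) (hab : a < b) {h : ℝ → ℝ}
    (hh : ContinuousOn h (Set.Icc a b)) {f : ℝ → ℝ} (hf : ContinuousOn f (Set.Icc a b))
    (hmom : ∀ P : Polynomial ℝ, (∫ t in a..b, h t * Polynomial.eval t⁻¹ P) = 0) :
    (∫ t in a..b, h t * f t) = 0 := by
  obtain ⟨Mh, hMh⟩ := isCompact_Icc.exists_bound_of_continuousOn hh
  have hMh0 : 0 ≤ Mh := le_trans (norm_nonneg _) (hMh a ⟨le_refl a, hab.le⟩)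
  set X := Set.Icc a b
  have hne : ∀ x : X, (x : ℝ) ≠ 0 := fun x => ne_of_gt (lt_of_lt_of_le ha x.2.1)
  set ι : C(X, ℝ) := ⟨fun x => (x : ℝ)⁻¹, Continuous.inv₀ continuous_subtype_val hne⟩ with hι
  set A' : Subalgebra ℝ C(X, ℝ) := Algebra.adjoin ℝ {ι} with hA'
  have hsep : A'.SeparatesPoints := by
    intro x y hxy
    refine ⟨ι, ⟨ι, Algebra.self_mem_adjoin_singleton ℝ ι, rfl⟩, ?_⟩
    simp only [hι, ContinuousMap.coe_mk]
    exact fun hinv => hxy (Subtype.ext (inv_injective hinv))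
  set fC : C(X, ℝ) := ⟨X.restrict f, hf.restrict⟩ with hfC
  -- it suffices to bound |T| by C * ε for all ε
  rw [← abs_eq_zero]
  by_contra hT
  have hTpos : 0 < |∫ t in a..b, h t * f t| := lt_of_le_of_ne (abs_nonneg _) (Ne.symm hT)
  set ε : ℝ := |∫ t in a..b, h t * f t| / ((Mh + 1) * (b - a)) with hεdef
  have hεpos : 0 < ε := by
    apply div_pos hTpos
    have : 0 < b - a := by linarith
    positivity
  obtain ⟨g, hg⟩ := ContinuousMap.exists_mem_subalgebra_near_continuousMap_of_separatesPoints
    A' hsep fC ε hεpos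
  obtain ⟨P, hP⟩ : ∃ P : Polynomial ℝ, Polynomial.aeval ι P = (g : C(X, ℝ)) := by
    have h2 : (g : C(X, ℝ)) ∈ (Polynomial.aeval (R := ℝ) ι).range := by
      rw [← Algebra.adjoin_singleton_eq_range_aeval ℝ ι]; exact g.2
    exact h2
  have hgx : ∀ x : X, (g : C(X, ℝ)) x = Polynomial.eval ((x : ℝ)⁻¹) P := by
    intro x
    rw [← hP, Polynomial.aeval_continuousMap_apply]
    rfl
  have hptwise : ∀ t ∈ Set.Icc a b, |f t - Polynomial.eval t⁻¹ P| ≤ ε := by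
    intro t ht
    have h1 := ContinuousMap.norm_coe_le_norm ((g : C(X, ℝ)) - fC) ⟨t, ht⟩
    rw [ContinuousMap.sub_apply] at h1
    rw [hgx ⟨t, ht⟩] at h1
    simp only [hfC, ContinuousMap.coe_mk, Set.restrict_apply] at h1
    have h2 : |f t - Polynomial.eval t⁻¹ P| = ‖Polynomial.eval ((⟨t, ht⟩ : X) : ℝ)⁻¹ P - f t‖ := by
      rw [Real.norm_eq_abs, abs_sub_comm]
    rw [h2]
    exact h1.trans hg.le
  -- integrability
  have hint1 : IntervalIntegrable (fun t => h t * f t) volume a b := by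
    apply ContinuousOn.intervalIntegrable; rw [Set.uIcc_of_le hab.le]; exact hh.mul hf
  have hcontP : ContinuousOn (fun t => Polynomial.eval t⁻¹ P) (Set.Icc a b) := by
    apply (Polynomial.continuous P).comp_continuousOn
    exact ContinuousOn.inv₀ continuousOn_id fun t ht => ne_of_gt (lt_of_lt_of_le ha ht.1)
  have hint2 : IntervalIntegrable (fun t => h t * Polynomial.eval t⁻¹ P) volume a b := by
    apply ContinuousOn.intervalIntegrable; rw [Set.uIcc_of_le hab.le]; exact hh.mul hcontP
  have hsplit : (∫ t in a..b, h t * f t)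
      = ∫ t in a..b, (h t * f t - h t * Polynomial.eval t⁻¹ P) := by
    rw [intervalIntegral.integral_sub hint1 hint2, hmom P, sub_zero]
  have hbd : |∫ t in a..b, (h t * f t - h t * Polynomial.eval t⁻¹ P)| ≤ Mh * ε * |b - a| := by
    have := intervalIntegral.norm_integral_le_of_norm_le_const
      (C := Mh * ε) (f := fun t => h t * f t - h t * Polynomial.eval t⁻¹ P)
      (a := a) (b := b) ?_
    · simpa using this
    · intro t ht
      have htI : t ∈ Set.Icc a b := by
        rw [Set.uIoc_of_le hab.le] at ht; exact Set.Ioc_subset_Icc_self ht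
      have : h t * f t - h t * Polynomial.eval t⁻¹ P = h t * (f t - Polynomial.eval t⁻¹ P) := by
        ring
      show |h t * f t - h t * Polynomial.eval t⁻¹ P| ≤ Mh * ε
      rw [this, abs_mul]
      exact mul_le_mul ((Real.norm_eq_abs (h t)) ▸ hMh t htI) (hptwise t htI)
        (abs_nonneg _) hMh0
  have hbd' : |∫ t in a..b, h t * f t| ≤ Mh * ε * (b - a) := by
    rw [hsplit]
    have : |b - a| = b - a := abs_of_pos (by linarith)
    rw [← this]
    exact hbd
  have hba : 0 < b - a := by linarith
  have hkey : Mh * ε * (b - a) < |∫ t in a..b, h t * f t| := by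
    rw [hεdef]
    rw [div_eq_inv_mul]
    have hMba : 0 < (Mh + 1) * (b - a) := by positivity
    calc Mh * (((Mh + 1) * (b - a))⁻¹ * |∫ t in a..b, h t * f t|) * (b - a)
        = |∫ t in a..b, h t * f t| * ((Mh * (b - a)) / ((Mh + 1) * (b - a))) := by
          field_simp
      _ < |∫ t in a..b, h t * f t| * 1 := by
          apply mul_lt_mul_of_pos_left _ hTpos
          rw [div_lt_one hMba]
          nlinarith
      _ = |∫ t in a..b, h t * f t| := mul_one _
  linarith


lemma aux_pos {a b : ℝ} (hab : a < b) {q : ℝ → ℝ} (hq : ContinuousOn q (Set.Icc a b))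
    (hnn : ∀ t ∈ Set.Icc a b, 0 ≤ q t) (hT : (∫ t in a..b, q t) = 0) :
    ∀ t ∈ Set.Ioo a b, q t = 0 := by
  intro t₀ ht₀
  by_contra hq0
  have hqpos : 0 < q t₀ := lt_of_le_of_ne (hnn t₀ (Set.Ioo_subset_Icc_self ht₀)) (Ne.symm hq0)
  have hca : ContinuousAt q t₀ :=
    (hq t₀ (Set.Ioo_subset_Icc_self ht₀)).continuousAt (Icc_mem_nhds ht₀.1 ht₀.2)
  have hev : ∀ᶠ x in nhds t₀, q t₀ / 2 < q x ∧ x ∈ Set.Ioo a b :=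
    Filter.Eventually.and (hca.eventually (lt_mem_nhds (half_lt_self hqpos)))
      (isOpen_Ioo.mem_nhds ht₀)
  obtain ⟨δ, hδpos, hδ⟩ := Metric.eventually_nhds_iff.1 hev
  set c := t₀ - δ / 2 with hc
  set d := t₀ + δ / 2 with hd
  have hcd : c < d := by simp only [hc, hd]; linarith
  have hmem : ∀ x ∈ Set.Icc c d, q t₀ / 2 < q x ∧ x ∈ Set.Ioo a b := by
    intro x hx
    apply hδ
    rw [Real.dist_eq, abs_lt]
    constructor <;> [skip; skip] <;> (simp only [hc, hd] at hx; cases hx; linarith)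
  have hcI : c ∈ Set.Ioo a b := (hmem c ⟨le_refl c, hcd.le⟩).2
  have hdI : d ∈ Set.Ioo a b := (hmem d ⟨hcd.le, le_refl d⟩).2
  have hint : ∀ u v : ℝ, a ≤ u → u ≤ v → v ≤ b → IntervalIntegrable q volume u v := by
    intro u v hu huv hv
    apply ContinuousOn.intervalIntegrable
    apply hq.mono
    intro x hx
    rw [Set.uIcc_of_le huv] at hx; exact ⟨hu.trans hx.1, hx.2.trans hv⟩
  have hsplit1 : (∫ t in a..c, q t) + (∫ t in c..b, q t) = ∫ t in a..b, q t :=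
    intervalIntegral.integral_add_adjacent_intervals (hint a c le_rfl hcI.1.le hcI.2.le)
      (hint c b hcI.1.le hcI.2.le le_rfl)
  have hsplit2 : (∫ t in c..d, q t) + (∫ t in d..b, q t) = ∫ t in c..b, q t :=
    intervalIntegral.integral_add_adjacent_intervals (hint c d hcI.1.le hcd.le hdI.2.le)
      (hint d b hdI.1.le hdI.2.le le_rfl)
  have h1 : 0 ≤ ∫ t in a..c, q t :=
    intervalIntegral.integral_nonneg hcI.1.le fun u hu => hnn u ⟨hu.1, hu.2.trans hcI.2.le⟩
  have h2 : 0 ≤ ∫ t in d..b, q t :=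
    intervalIntegral.integral_nonneg hdI.2.le fun u hu => hnn u ⟨hdI.1.le.trans hu.1, hu.2⟩
  have h3 : (d - c) * (q t₀ / 2) ≤ ∫ t in c..d, q t := by
    have := intervalIntegral.integral_mono_on hcd.le intervalIntegrable_const
      (hint c d hcI.1.le hcd.le hdI.2.le) (fun x hx => (hmem x hx).1.le)
    rw [intervalIntegral.integral_const] at this
    simpa [smul_eq_mul] using this
  have h4 : 0 < (d - c) * (q t₀ / 2) := by
    apply mul_pos (by linarith) (by linarith)
  rw [← hsplit1, ← hsplit2] at hT
  linarith


open MeasureTheory intervalIntegral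

/-- Abel-transform rigidity step (after the change of variables to the invariant
parameter `t ∈ [a,b]`): if `ρ̇` is continuous on `[a,b]`, vanishes at the endpoints
(the axis points), the weight `w = γ₁ J` is continuous and strictly positive on
`(a,b)`, and the Abel transform `A(Z) = ∫_a^b ρ̇(t) w(t) (t-(b-Z))^{-1/2} dt` vanishes
for a sequence of `Z` accumulating at `b` from below, then `ρ̇ ≡ 0` on `[a,b]`. -/
theorem stmt_14 (a b : ℝ) (ha : 0 < a) (hab : a < b)
    (ρdot w : ℝ → ℝ)
    (hρ : ContinuousOn ρdot (Set.Icc a b)) (hw : ContinuousOn w (Set.Icc a b))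
    (hwpos : ∀ t ∈ Set.Ioo a b, 0 < w t)
    (hend : ρdot a = 0 ∧ ρdot b = 0)
    (A : ℝ → ℝ)
    (hA : ∀ Z, A Z = ∫ t in a..b, ρdot t * w t / Real.sqrt (t - (b - Z)))
    (hzeros : ∀ δ > 0, ∃ Z ∈ Set.Ioo (b - δ) b, A Z = 0) :
    ∀ t ∈ Set.Icc a b, ρdot t = 0 := by
  obtain ⟨henda, hendb⟩ := hend
  set f : ℝ → ℝ := fun t => ρdot t * w t with hfdef
  have hf : ContinuousOn f (Set.Icc a b) := hρ.mul hw
  set g : ℕ → ℝ → ℝ := fun k s => ∫ t in a..b, f t * (t - s) ^ (-((k : ℝ) + 1/2)) with hgdef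
  have hg : ∀ (k : ℕ) (s₀ : ℝ), s₀ < a →
      HasDerivAt (g k) (((k : ℝ) + 1/2) * g (k+1) s₀) s₀ := by
    intro k s₀ hs₀
    have hder := aux_deriv ha hab hf ((k : ℝ) + 1/2) (by positivity) s₀ hs₀
    have hexp : -((((k:ℝ)) + 1/2) + 1) = -((((k:ℕ)+1 : ℕ) : ℝ) + 1/2) := by push_cast; ring
    rw [hexp] at hder
    exact hder
  have hacc : ∀ k : ℕ, ∀ ε : ℝ, 0 < ε → ε ≤ a → ∃ s ∈ Set.Ioo (0:ℝ) ε, g k s = 0 := by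
    intro k
    induction k with
    | zero =>
      intro ε hε hεa
      obtain ⟨Z, hZ, hAZ⟩ := hzeros ε hε
      refine ⟨b - Z, ⟨by linarith [hZ.2], by linarith [hZ.1]⟩, ?_⟩
      rw [hA Z] at hAZ
      rw [← hAZ]
      apply intervalIntegral.integral_congr
      intro t ht
      rw [Set.uIcc_of_le hab.le] at ht
      have hpos : 0 < t - (b - Z) := by
        have h1 : b - Z < ε := by linarith [hZ.1]
        linarith [ht.1]
      show f t * (t - (b - Z)) ^ (-(((0:ℕ):ℝ) + 1/2)) = ρdot t * w t / Real.sqrt (t - (b - Z))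
      rw [show -((((0:ℕ)):ℝ) + 1/2) = -(1/(2:ℝ)) by norm_num]
      rw [Real.rpow_neg hpos.le, ← Real.sqrt_eq_rpow, div_eq_mul_inv]
    | succ k ih =>
      intro ε hε hεa
      obtain ⟨s₁, hs₁, hgs₁⟩ := ih ε hε hεa
      obtain ⟨s₂, hs₂, hgs₂⟩ := ih s₁ hs₁.1 (le_of_lt (lt_of_lt_of_le hs₁.2 hεa))
      have hs₁a : s₁ < a := lt_of_lt_of_le hs₁.2 hεa
      obtain ⟨c, hc, hdc⟩ := exists_hasDerivAt_eq_zero (f := g k)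
        (f' := fun x => ((k:ℝ) + 1/2) * g (k+1) x) hs₂.2
        (fun x hx => (hg k x (lt_of_le_of_lt hx.2 hs₁a)).continuousAt.continuousWithinAt)
        (hgs₂.trans hgs₁.symm)
        (fun x hx => hg k x (lt_trans hx.2 hs₁a))
      refine ⟨c, ⟨lt_trans hs₂.1 hc.1, lt_trans hc.2 hs₁.2⟩, ?_⟩
      have hne : ((k:ℝ) + 1/2) ≠ 0 := by positivity
      exact (mul_eq_zero.1 hdc).resolve_left hne
  have hg0 : ∀ k : ℕ, g k 0 = 0 := by
    intro k
    have hchoice : ∀ n : ℕ, ∃ s ∈ Set.Ioo (0:ℝ) (min a (1/((n:ℝ)+1))), g k s = 0 := fun n =>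
      hacc k _ (lt_min ha (by positivity)) (min_le_left _ _)
    choose s hs hgs using hchoice
    have htend : Filter.Tendsto s Filter.atTop (nhds 0) := by
      apply squeeze_zero (fun n => (hs n).1.le)
        (fun n => ((hs n).2.le.trans (min_le_right _ _)))
      exact tendsto_one_div_add_atTop_nhds_zero_nat
    have hcont := (hg k 0 ha).continuousAt
    have hlim := hcont.tendsto.comp htend
    simp only [Function.comp_def, hgs] at hlim
    exact (tendsto_nhds_unique hlim tendsto_const_nhds)
  have hmomk : ∀ k : ℕ, (∫ t in a..b, f t * t ^ (-((k:ℝ) + 1/2))) = 0 := by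
    intro k
    have h0 := hg0 k
    simp only [hgdef, sub_zero] at h0
    exact h0
  have hmono : ∀ k : ℕ, (∫ t in a..b, (f t * t ^ (-(1/2:ℝ))) * (t⁻¹) ^ k) = 0 := by
    intro k
    rw [← hmomk k]
    apply intervalIntegral.integral_congr
    intro t ht
    rw [Set.uIcc_of_le hab.le] at ht
    have htpos : 0 < t := lt_of_lt_of_le ha ht.1
    show (f t * t ^ (-(1/2:ℝ))) * (t⁻¹) ^ k = f t * t ^ (-((k:ℝ) + 1/2))
    rw [inv_pow, ← Real.rpow_natCast t k, ← Real.rpow_neg htpos.le, mul_assoc,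
      ← Real.rpow_add htpos, show (-(1/2:ℝ)) + (-(k:ℝ)) = -((k:ℝ) + 1/2) by ring]
  have hh : ContinuousOn (fun t => f t * t ^ (-(1/2:ℝ))) (Set.Icc a b) := by
    have hc0 := aux_contOn (x := 0) (b := b) (p := -(1/2:ℝ)) ha hf
    simpa using hc0
  have hintP : ∀ Q : Polynomial ℝ,
      IntervalIntegrable (fun t => (f t * t ^ (-(1/2:ℝ))) * Polynomial.eval t⁻¹ Q) volume a b := by
    intro Q
    apply ContinuousOn.intervalIntegrable
    rw [Set.uIcc_of_le hab.le]
    exact hh.mul ((Polynomial.continuous Q).comp_continuousOn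
      (ContinuousOn.inv₀ continuousOn_id fun t ht => ne_of_gt (lt_of_lt_of_le ha ht.1)))
  have hmomP : ∀ P : Polynomial ℝ,
      (∫ t in a..b, (f t * t ^ (-(1/2:ℝ))) * Polynomial.eval t⁻¹ P) = 0 := by
    intro P
    induction P using Polynomial.induction_on' with
    | add p q hp hq =>
      simp only [Polynomial.eval_add, mul_add]
      rw [intervalIntegral.integral_add (hintP p) (hintP q), hp, hq, add_zero]
    | monomial n r =>
      simp only [Polynomial.eval_monomial]
      have hrw : (fun t => (f t * t ^ (-(1/2:ℝ))) * (r * t⁻¹ ^ n))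
          = fun t => r * ((f t * t ^ (-(1/2:ℝ))) * t⁻¹ ^ n) := by funext t; ring
      rw [hrw, intervalIntegral.integral_const_mul, hmono n, mul_zero]
  have hT : (∫ t in a..b, (f t * t ^ (-(1/2:ℝ))) * f t) = 0 := aux_dense ha hab hh hf hmomP
  have hnn : ∀ t ∈ Set.Icc a b, 0 ≤ (f t * t ^ (-(1/2:ℝ))) * f t := by
    intro t ht
    have h1 : 0 ≤ t ^ (-(1/2:ℝ)) := Real.rpow_nonneg (le_of_lt (lt_of_lt_of_le ha ht.1)) _
    nlinarith [sq_nonneg (f t)]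
  have hq0 := aux_pos hab (hh.mul hf) hnn hT
  intro t ht
  rcases eq_or_lt_of_le ht.1 with h1 | h1
  · rw [← h1]; exact henda
  rcases eq_or_lt_of_le ht.2 with h2 | h2
  · rw [h2]; exact hendb
  have hq := hq0 t ⟨h1, h2⟩
  have htpos : 0 < t := lt_trans ha h1
  have hrp : 0 < t ^ (-(1/2:ℝ)) := Real.rpow_pos_of_pos htpos _
  have hft : f t = 0 := by
    rcases mul_eq_zero.1 hq with h | h
    · rcases mul_eq_zero.1 h with h3 | h3
      · exact h3
      · exact absurd h3 (ne_of_gt hrp)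
    · exact h
  have hwt := hwpos t ⟨h1, h2⟩
  rcases mul_eq_zero.1 (show ρdot t * w t = 0 from hft) with h | h
  · exact h
  · exact absurd h (ne_of_gt hwt)
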